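/- Let A be a Grothendieck abelian category and T a monad on A whose underlying endofunctor preserves all small colimits. Then the Eilenberg–Moore category of T-algebras is a Grothendieck abelian category, and the forgetful functor from T-algebras to A preserves all small limits and all small colimits. -/

import Mathlib

open CategoryTheory CategoryTheory.Limits

universe v u

section AbelianAux

variable {C : Type*} [Category C] {D : Type*} [Category D]
variable [Preadditive C] [HasFiniteProducts C] [HasKernels C] [HasCokernels C]
variable [Abelian D]

/-- If `F : C ⥤ D` is a faithful-enough exact functor (preserves kernels and cokernels,
reflects isomorphisms) into an abelian category, and `C` is preadditive with finite products,
kernels and cokernels, then `C` is abelian. -/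
noncomputable def abelianOfExactReflecting (F : C ⥤ D) [F.PreservesZeroMorphisms]
    [F.ReflectsIsomorphisms]
    [PreservesLimitsOfShape WalkingParallelPair F]
    [PreservesColimitsOfShape WalkingParallelPair F] :
    Abelian C := by
  haveI : ∀ {X Y : C} (f : X ⟶ Y), IsIso (Abelian.coimageImageComparison f) := by
    intro X Y f
    -- comparison isos between the image of the (co)image and the (co)image of the image
    let φ : F.obj (Abelian.coimage f) ≅ Abelian.coimage (F.map f) :=
      PreservesCokernel.iso F (kernel.ι f) ≪≫
        cokernel.mapIso _ _ (PreservesKernel.iso F f) (Iso.refl _)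
          (by rw [Iso.refl_hom, Category.comp_id, PreservesKernel.iso_hom,
                kernelComparison_comp_ι])
    have hcok : ∀ {P Q : C} (g : P ⟶ Q),
        F.map (cokernel.π g) ≫ (PreservesCokernel.iso F g).hom = cokernel.π (F.map g) := by
      intro P Q g
      have h := π_comp_cokernelComparison g F
      rw [← PreservesCokernel.iso_inv, Iso.comp_inv_eq] at h
      exact h.symm
    let ψ : F.obj (Abelian.image f) ≅ Abelian.image (F.map f) :=
      PreservesKernel.iso F (cokernel.π f) ≪≫
        kernel.mapIso _ _ (Iso.refl _) (PreservesCokernel.iso F f)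
          (by rw [Iso.refl_hom, Category.id_comp, hcok])
    have E1 : F.map (Abelian.coimage.π f) ≫ φ.hom = Abelian.coimage.π (F.map f) := by
      show F.map (cokernel.π (kernel.ι f)) ≫ _ = cokernel.π (kernel.ι (F.map f))
      simp only [φ, Iso.trans_hom, cokernel.mapIso_hom, ← Category.assoc, hcok]
      simp [cokernel.map]
    have E2 : ψ.hom ≫ Abelian.image.ι (F.map f) = F.map (Abelian.image.ι f) := by
      show _ ≫ kernel.ι (cokernel.π (F.map f)) = F.map (kernel.ι (cokernel.π f))
      simp [ψ, PreservesKernel.iso_hom, kernel.map]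
    have epi1 : Epi (F.map (Abelian.coimage.π f)) := by
      have : F.map (Abelian.coimage.π f) = Abelian.coimage.π (F.map f) ≫ φ.inv := by
        rw [Iso.eq_comp_inv]; exact E1
      rw [this]; infer_instance
    have key : φ.hom ≫ Abelian.coimageImageComparison (F.map f) =
        F.map (Abelian.coimageImageComparison f) ≫ ψ.hom := by
      rw [← cancel_epi (F.map (Abelian.coimage.π f)),
        ← cancel_mono (Abelian.image.ι (F.map f))]
      simp only [Category.assoc]
      rw [reassoc_of% E1, E2, Abelian.coimage_image_factorisation, ← F.map_comp, ← F.map_comp,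
        Abelian.coimage_image_factorisation]
    have : IsIso (F.map (Abelian.coimageImageComparison f)) := by
      have : F.map (Abelian.coimageImageComparison f) =
          φ.hom ≫ Abelian.coimageImageComparison (F.map f) ≫ ψ.inv := by
        rw [← Category.assoc, key]; simp
      rw [this]; infer_instance
    exact isIso_of_reflects_iso _ F
  exact Abelian.ofCoimageImageComparisonIsIso

end AbelianAux

/-- Let `A` be a Grothendieck abelian category (abelian, cocomplete, AB5,
with a separator) and `T` a monad on `A` preserving all small colimits. Then the
Eilenberg-Moore category of `T`-algebras is a Grothendieck abelian category, and the
forgetful functor preserves all small limits and colimits. -/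
theorem stmt16 {A : Type u} [Category.{v} A] [Abelian A]
    [HasColimits A] [AB5 A] [HasSeparator A]
    (T : Monad A) [PreservesColimits T.toFunctor] :
    Nonempty (Abelian (Monad.Algebra T)) ∧
    HasColimits (Monad.Algebra T) ∧
    (∀ (J : Type v) [SmallCategory J] [IsFiltered J]
        [HasColimitsOfShape J (Monad.Algebra T)],
        PreservesFiniteLimits (colim (J := J) (C := Monad.Algebra T))) ∧
    HasSeparator (Monad.Algebra T) ∧
    PreservesLimits (Monad.forget T) ∧
    PreservesColimits (Monad.forget T) := by
  -- `T` preserves colimits of small shapes in any universe below `v`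
  haveI : PreservesColimitsOfSize.{0, 0} T.toFunctor := preservesColimitsOfSize_shrink _
  -- `T` is additive
  haveI : T.toFunctor.Additive := by
    haveI := preservesBinaryBiproducts_of_preservesBinaryCoproducts T.toFunctor
    exact Functor.additive_of_preservesBinaryBiproducts T.toFunctor
  -- colimits in the Eilenberg-Moore category
  haveI hcol : HasColimits (Monad.Algebra T) :=
    hasColimits_of_hasColimits_createsColimits (Monad.forget T)
  haveI : PreservesColimits (Monad.forget T) :=
    preservesColimits_of_createsColimits_and_hasColimits _
  haveI : PreservesLimits (Monad.forget T) := T.adj.rightAdjoint_preservesLimits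
  haveI : PreservesLimitsOfSize.{0, 0} (Monad.forget T) := preservesLimitsOfSize_shrink _
  haveI : PreservesColimitsOfSize.{0, 0} (Monad.forget T) := preservesColimitsOfSize_shrink _
  -- (finite) limits in the Eilenberg-Moore category
  haveI : HasFiniteLimits (Monad.Algebra T) :=
    ⟨fun _ _ _ => hasLimitsOfShape_of_hasLimitsOfShape_createsLimitsOfShape (Monad.forget T)⟩
  haveI : HasColimitsOfShape WalkingParallelPair (Monad.Algebra T) :=
    hasColimitsOfShape_of_hasColimitsOfShape_createsColimitsOfShape (Monad.forget T)
  -- the abelian structure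
  have hab : Nonempty (Abelian (Monad.Algebra T)) :=
    ⟨abelianOfExactReflecting (Monad.forget T)⟩
  -- AB5
  have hAB5 : ∀ (J : Type v) [SmallCategory J] [IsFiltered J]
      [HasColimitsOfShape J (Monad.Algebra T)],
      PreservesFiniteLimits (colim (J := J) (C := Monad.Algebra T)) := by
    intro J _ _ _
    haveI : PreservesFiniteLimits ((Functor.whiskeringRight J (Monad.Algebra T) A).obj
        (Monad.forget T)) := ⟨fun _ _ _ => inferInstance⟩
    haveI : PreservesFiniteLimits ((Functor.whiskeringRight J (Monad.Algebra T) A).obj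
        (Monad.forget T) ⋙ colim) := comp_preservesFiniteLimits _ _
    haveI : PreservesFiniteLimits
        (colim (J := J) (C := Monad.Algebra T) ⋙ Monad.forget T) :=
      preservesFiniteLimits_of_natIso (preservesColimitNatIso (Monad.forget T)).symm
    exact preservesFiniteLimits_of_reflects_of_preserves _ (Monad.forget T)
  -- the separator
  have hsep : HasSeparator (Monad.Algebra T) := by
    refine ⟨⟨T.free.obj (separator A), (isSeparator_def _).2 fun X Y f g hfg => ?_⟩⟩
    apply (Monad.forget T).map_injective
    apply (isSeparator_separator A).def
    intro h
    have := hfg ((T.adj.homEquiv _ _).symm h)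
    have h1 := congrArg (T.adj.homEquiv _ _) this
    simpa only [Adjunction.homEquiv_naturality_right, Equiv.apply_symm_apply] using h1
  exact ⟨hab, hcol, hAB5, hsep, inferInstance, inferInstance⟩
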